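/- Every element f of the field of fractions Q(Λ_{ℤ,univ}) of the universal Novikov ring over ℤ, viewed as an element of Λ_{ℚ,univ} = HahnSeries ℝ ℚ via the canonical embedding, can be written as a series ∑ c_j T^{μ_j} with c_j ∈ ℚ in which only finitely many primes appear in the denominators of the coefficients; precisely, there exists a nonzero integer b such that every coefficient of f lies in the subring ℤ[1/b] of ℚ. -/

import Mathlib

/-!
STATEMENT 0: Every element `f` of the field of fractions `Q(Λ_{ℤ,univ})` of the universal
Novikov ring `Λ_{ℤ,univ} = HahnSeries ℝ ℤ`, viewed inside `Λ_{ℚ,univ} = HahnSeries ℝ ℚ`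
via the canonical (coefficientwise) embedding, has only finitely many primes appearing in
the denominators of its coefficients: there is a nonzero integer `b` such that every
coefficient of `f` lies in the subring `ℤ[1/b]` of `ℚ`.
-/

noncomputable section

/-- The canonical coefficientwise embedding `Λ_{ℤ,univ} → Λ_{ℚ,univ}`. -/
def iota (x : HahnSeries ℝ ℤ) : HahnSeries ℝ ℚ := x.map (Int.castRingHom ℚ)

theorem novikov_fraction_field_finitely_many_prime_denominators
    (f : HahnSeries ℝ ℚ)
    (hf : ∃ A B : HahnSeries ℝ ℤ, B ≠ 0 ∧ f * iota B = iota A) :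
    ∃ b : ℤ, b ≠ 0 ∧ ∀ r : ℝ, ∃ (n : ℤ) (k : ℕ), f.coeff r = (n : ℚ) / (b : ℚ) ^ k := by
  obtain ⟨A, B, hB, hAB⟩ := hf
  set b : ℤ := B.leadingCoeff with hbdef
  have hbne : b ≠ 0 := HahnSeries.leadingCoeff_ne_zero.mpr hB
  have hbQ : (b : ℚ) ≠ 0 := Int.cast_ne_zero.mpr hbne
  set S : Subring ℚ := Subring.closure {((b : ℚ))⁻¹} with hSdef
  -- membership characterization
  have hmem : ∀ x ∈ S, ∃ (n : ℤ) (k : ℕ), x = (n : ℚ) / (b : ℚ) ^ k := by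
    intro x hx
    induction hx using Subring.closure_induction with
    | mem x hx =>
      rw [Set.mem_singleton_iff] at hx
      refine ⟨1, 1, by rw [hx]; push_cast; rw [pow_one, one_div]⟩
    | zero => exact ⟨0, 0, by simp⟩
    | one => exact ⟨1, 0, by simp⟩
    | add x y hx hy ihx ihy =>
      obtain ⟨n, k, rfl⟩ := ihx
      obtain ⟨m, l, rfl⟩ := ihy
      refine ⟨n * b ^ l + m * b ^ k, k + l, ?_⟩
      have hk : (b : ℚ) ^ k ≠ 0 := pow_ne_zero _ hbQ
      have hl : (b : ℚ) ^ l ≠ 0 := pow_ne_zero _ hbQ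
      rw [div_add_div _ _ hk hl, pow_add]
      push_cast
      ring
    | neg x hx ihx =>
      obtain ⟨n, k, rfl⟩ := ihx
      exact ⟨-n, k, by push_cast; ring⟩
    | mul x y hx hy ihx ihy =>
      obtain ⟨n, k, rfl⟩ := ihx
      obtain ⟨m, l, rfl⟩ := ihy
      exact ⟨n * m, k + l, by push_cast [pow_add]; rw [div_mul_div_comm]⟩
  refine ⟨b, hbne, fun r => ?_⟩
  -- it suffices to show f.coeff r ∈ S
  suffices h : f.coeff r ∈ S by exact hmem _ h
  -- B over S
  have hinv : ((b : ℚ))⁻¹ ∈ S := Subring.subset_closure rfl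
  set B' : HahnSeries ℝ S := B.map (Int.castRingHom S) with hB'def
  have hcoeffB' : ∀ g : ℝ, ((B'.coeff g : S) : ℚ) = (B.coeff g : ℚ) := by
    intro g; simp [hB'def]
  have hB'ne : B' ≠ 0 := by
    intro h
    apply hB
    ext g
    have := congrArg (fun x => ((HahnSeries.coeff x g : S) : ℚ)) h
    simp only [HahnSeries.coeff_zero] at this
    rw [hcoeffB'] at this
    exact_mod_cast this
  have horder : B'.order = B.order := by
    apply le_antisymm
    · apply HahnSeries.order_le_of_coeff_ne_zero
      have : B.coeff B.order ≠ 0 := HahnSeries.coeff_order_eq_zero.not.mpr hB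
      simp only [hB'def, HahnSeries.map_coeff]
      intro h
      apply this
      have := congrArg (fun x : S => (x : ℚ)) h
      simpa using this
    · apply HahnSeries.order_le_of_coeff_ne_zero
      have h1 : B'.coeff B'.order ≠ 0 := HahnSeries.coeff_order_eq_zero.not.mpr hB'ne
      intro h
      apply h1
      apply Subtype.ext
      rw [hcoeffB', h]
      simp
  have hlead : IsUnit B'.leadingCoeff := by
    refine IsUnit.of_mul_eq_one ⟨(b : ℚ)⁻¹, hinv⟩ ?_
    apply Subtype.ext
    rw [HahnSeries.leadingCoeff_eq, horder]
    push_cast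
    rw [hcoeffB']
    rw [hbdef, HahnSeries.leadingCoeff_eq]
    exact mul_inv_cancel₀ (by exact_mod_cast HahnSeries.coeff_order_eq_zero.not.mpr hB)
  have hU : IsUnit B' := HahnSeries.isUnit_iff.mpr hlead
  obtain ⟨u, hu⟩ := hU
  set v : HahnSeries ℝ S := ((u⁻¹ : (HahnSeries ℝ S)ˣ) : HahnSeries ℝ S) with hvdef
  have huv : B' * v = 1 := by rw [← hu, hvdef]; exact u.mul_inv
  have hmulmap : ∀ x y : HahnSeries ℝ S, (x * y).map S.subtype
      = x.map S.subtype * y.map S.subtype := by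
    intro x y
    exact HahnSeries.map_mul (S.subtype.toNonUnitalRingHom)
  have honemap : (1 : HahnSeries ℝ S).map S.subtype = 1 := by
    ext g
    by_cases h : g = (0 : ℝ) <;> simp [h]
  -- map down to ℚ
  have hmapB : B'.map S.subtype = iota B := by
    ext g; simp [hB'def, iota]
  have hmul : iota B * v.map S.subtype = 1 := by
    rw [← hmapB, ← hmulmap, huv, honemap]
  have hf' : f = iota A * v.map S.subtype := by
    calc f = f * (iota B * v.map S.subtype) := by rw [hmul, mul_one]
    _ = (f * iota B) * v.map S.subtype := by ring
    _ = iota A * v.map S.subtype := by rw [hAB]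
  have hmapA : (A.map (Int.castRingHom S)).map S.subtype = iota A := by
    ext g; simp [iota]
  have : f = ((A.map (Int.castRingHom S)) * v).map S.subtype := by
    rw [hmulmap, hmapA, hf']
  rw [this]
  simp only [HahnSeries.map_coeff]
  exact SetLike.coe_mem _
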